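/- Let S be a zerosumfree left CP-semiring. Then: (1) S is zeroic (for every s ∈ S there exists m ∈ S with s + m = m) and additively π-regular (there exist n ≥ 1 and y ∈ S with n • (1:S) = n • 1 + y + n • 1); (2) there exists an element e ∈ S with e * e = e such that I⁺(S) := {x ∈ S : x + x = x} equals the set Se = {s * e : s ∈ S}; (3) the Bourne congruence modulo I⁺(S) is the universal congruence: for all a, b ∈ S there exist x, y ∈ S with x + x = x, y + y = y, and a + x = b + y. -/
import Mathlib

universe u

/-- A left CP-semiring: every cyclic left `S`-semimodule is projective. -/
def IsLeftCPSemiring (S : Type u) [Semiring S] : Prop :=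
  ∀ (M : Type u) [AddCommMonoid M] [Module S M],
    (∃ m : M, Submodule.span S {m} = ⊤) → Module.Projective S M

namespace ZSFCPAux

variable {S : Type u} [Semiring S]

/-- A congruence on `S` viewed as a left module over itself. -/
structure LinCon (S : Type u) [Semiring S] where
  r : S → S → Prop
  rfl' : ∀ a, r a a
  symm' : ∀ {a b}, r a b → r b a
  trans' : ∀ {a b c}, r a b → r b c → r a c
  add' : ∀ {a b c d}, r a b → r c d → r (a + c) (b + d)
  smul' : ∀ (t : S) {a b}, r a b → r (t * a) (t * b)

variable (c : LinCon S)

def LinCon.setoid : Setoid S :=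
  ⟨c.r, ⟨c.rfl', fun h => c.symm' h, fun h h' => c.trans' h h'⟩⟩

def LinCon.Q : Type u := Quotient c.setoid

def LinCon.cls (a : S) : c.Q := Quotient.mk c.setoid a

lemma LinCon.cls_eq {a b : S} (h : c.r a b) : c.cls a = c.cls b := Quot.sound h

lemma LinCon.exact {a b : S} (h : c.cls a = c.cls b) : c.r a b := Quotient.exact h

instance : Add c.Q := ⟨Quotient.map₂ (· + ·) (fun _ _ h _ _ h' => c.add' h h')⟩
instance : Zero c.Q := ⟨c.cls 0⟩

lemma LinCon.cls_add (a b : S) : c.cls a + c.cls b = c.cls (a + b) := rfl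

instance : AddCommMonoid c.Q where
  add_assoc x y z := Quotient.inductionOn₃ x y z fun a b d =>
    congrArg (c.cls) (add_assoc a b d)
  zero_add x := Quotient.inductionOn x fun a => congrArg (c.cls) (zero_add a)
  add_zero x := Quotient.inductionOn x fun a => congrArg (c.cls) (add_zero a)
  add_comm x y := Quotient.inductionOn₂ x y fun a b => congrArg (c.cls) (add_comm a b)
  nsmul := nsmulRec

instance : SMul S c.Q := ⟨fun t => Quotient.map (t * ·) (fun _ _ h => c.smul' t h)⟩

lemma LinCon.cls_smul (t a : S) : t • c.cls a = c.cls (t * a) := rfl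

instance : Module S c.Q where
  one_smul x := Quotient.inductionOn x fun a => congrArg (c.cls) (one_mul a)
  mul_smul s t x := Quotient.inductionOn x fun a => congrArg (c.cls) (mul_assoc s t a)
  smul_zero t := congrArg (c.cls) (mul_zero t)
  smul_add t x y := Quotient.inductionOn₂ x y fun a b => congrArg (c.cls) (mul_add t a b)
  add_smul s t x := Quotient.inductionOn x fun a => congrArg (c.cls) (add_mul s t a)
  zero_smul x := Quotient.inductionOn x fun a => congrArg (c.cls) (zero_mul a)

def LinCon.π : S →ₗ[S] c.Q where
  toFun := c.cls
  map_add' _ _ := rfl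
  map_smul' _ _ := rfl

lemma LinCon.π_apply (a : S) : c.π a = c.cls a := rfl

lemma LinCon.π_surj : Function.Surjective c.π :=
  fun x => Quotient.inductionOn x fun a => ⟨a, c.π_apply a⟩

lemma LinCon.span_top : Submodule.span S {c.cls 1} = ⊤ := by
  rw [eq_top_iff]
  rintro x -
  refine Quotient.inductionOn x fun a => Submodule.mem_span_singleton.mpr ⟨a, ?_⟩
  rw [LinCon.cls_smul, mul_one]
  rfl

/-- The key consequence of projectivity of the cyclic semimodule `S/c`. -/
lemma LinCon.split (hS : IsLeftCPSemiring S) :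
    ∃ e : S, c.r e 1 ∧ (∀ a b, c.r a b → a * e = b * e) ∧ (∀ a : S, c.r (a * e) a) := by
  have hproj : Module.Projective S c.Q := hS c.Q ⟨c.cls 1, c.span_top⟩
  obtain ⟨g, hg⟩ := Module.projective_lifting_property c.π LinearMap.id c.π_surj
  have hgπ : ∀ x : c.Q, c.π (g x) = x := fun x => by
    have := DFunLike.congr_fun hg x
    simpa using this
  set e := g (c.cls 1) with he
  have hcls_e : c.cls e = c.cls 1 := by
    rw [← c.π_apply]
    exact hgπ _
  have hmk : ∀ a : S, c.cls (a * e) = c.cls a := by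
    intro a
    calc c.cls (a * e) = a • c.cls e := (c.cls_smul a e).symm
      _ = a • c.cls 1 := by rw [hcls_e]
      _ = c.cls a := by rw [c.cls_smul, mul_one]
  have hge : ∀ a : S, g (c.cls a) = a * e := by
    intro a
    have h1 : c.cls a = a • c.cls 1 := by rw [c.cls_smul, mul_one]
    rw [h1, map_smul, ← he, smul_eq_mul]
  refine ⟨e, c.exact (by rw [← one_mul e] ; exact hmk 1), ?_, fun a => c.exact (hmk a)⟩
  intro a b h
  have := congrArg g (c.cls_eq h)
  rwa [hge, hge] at this

/-- The congruence generated by `s ~ s + s`. -/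
inductive R2 : S → S → Prop
  | of (s : S) : R2 s (s + s)
  | refl (a : S) : R2 a a
  | symm {a b : S} : R2 a b → R2 b a
  | trans {a b c : S} : R2 a b → R2 b c → R2 a c
  | add {a b x y : S} : R2 a b → R2 x y → R2 (a + x) (b + y)
  | smul (t : S) {a b : S} : R2 a b → R2 (t * a) (t * b)

def c2 : LinCon S where
  r := R2
  rfl' := R2.refl
  symm' := fun h => R2.symm h
  trans' := fun h h' => R2.trans h h'
  add' := fun h h' => R2.add h h'
  smul' := fun t _ _ h => R2.smul t h

lemma nsmul_idem {M : Type*} [AddMonoid M] {x : M} (hx : x + x = x) :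
    ∀ m : ℕ, 0 < m → m • x = x := by
  intro m hm
  induction m with
  | zero => omega
  | succ k ih =>
    rcases Nat.eq_zero_or_pos k with h | h
    · subst h; simp
    · rw [succ_nsmul, ih h, hx]

private lemma bound_trans {a b d f g : S} {m n : ℕ} (h1 : a + f = m • b) (h2 : b + g = n • d) :
    a + (f + m • g) = (m * n) • d := by
  rw [← add_assoc, h1, ← smul_add, h2, smul_smul]

private lemma bound_add {a b x y f g : S} {m n : ℕ} (hm : 0 < m) (hn : 0 < n)
    (h1 : a + f = m • b) (h2 : x + g = n • y) :
    (a + x) + (f + g + (m * n - m) • b + (m * n - n) • y) = (m * n) • (b + y) := by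
  have hmk : m ≤ m * n := le_mul_of_one_le_right (Nat.zero_le m) hn
  have hnk : n ≤ m * n := le_mul_of_one_le_left (Nat.zero_le n) hm
  have e1 : m • b + (m * n - m) • b = (m * n) • b := by
    rw [← add_nsmul, Nat.add_sub_cancel' hmk]
  have e2 : n • y + (m * n - n) • y = (m * n) • y := by
    rw [← add_nsmul, Nat.add_sub_cancel' hnk]
  calc (a + x) + (f + g + (m * n - m) • b + (m * n - n) • y)
      = (a + f + (m * n - m) • b) + (x + g + (m * n - n) • y) := by
        simp only [add_assoc, add_left_comm, add_comm]
    _ = (m • b + (m * n - m) • b) + (n • y + (m * n - n) • y) := by rw [h1, h2]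
    _ = (m * n) • b + (m * n) • y := by rw [e1, e2]
    _ = (m * n) • (b + y) := (smul_add _ _ _).symm

private lemma bound_smul {a b f : S} {m : ℕ} (t : S) (h : a + f = m • b) :
    t * a + t * f = m • (t * b) := by
  rw [← mul_add, h, nsmul_eq_mul, nsmul_eq_mul, ← mul_assoc,
    ← (Nat.cast_commute m t).eq, mul_assoc]

/-- Chain-invariant lemma for `R2`. -/
lemma R2.bound {a b : S} (h : R2 a b) :
    (∃ m : ℕ, 0 < m ∧ ∃ f, a + f = m • b) ∧ (∃ m : ℕ, 0 < m ∧ ∃ f, b + f = m • a) := by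
  induction h with
  | of s =>
    exact ⟨⟨1, one_pos, s, by rw [one_smul]⟩, ⟨2, two_pos, 0, by rw [add_zero, two_nsmul]⟩⟩
  | refl a => exact ⟨⟨1, one_pos, 0, by rw [add_zero, one_smul]⟩,
      ⟨1, one_pos, 0, by rw [add_zero, one_smul]⟩⟩
  | symm h ih => exact ⟨ih.2, ih.1⟩
  | trans h1 h2 ih1 ih2 =>
    obtain ⟨⟨m1, hm1, f1, hf1⟩, ⟨m1', hm1', f1', hf1'⟩⟩ := ih1
    obtain ⟨⟨m2, hm2, f2, hf2⟩, ⟨m2', hm2', f2', hf2'⟩⟩ := ih2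
    exact ⟨⟨m1 * m2, Nat.mul_pos hm1 hm2, _, bound_trans hf1 hf2⟩,
      ⟨m2' * m1', Nat.mul_pos hm2' hm1', _, bound_trans hf2' hf1'⟩⟩
  | add h1 h2 ih1 ih2 =>
    obtain ⟨⟨m1, hm1, f1, hf1⟩, ⟨m1', hm1', f1', hf1'⟩⟩ := ih1
    obtain ⟨⟨m2, hm2, f2, hf2⟩, ⟨m2', hm2', f2', hf2'⟩⟩ := ih2
    exact ⟨⟨m1 * m2, Nat.mul_pos hm1 hm2, _, bound_add hm1 hm2 hf1 hf2⟩,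
      ⟨m1' * m2', Nat.mul_pos hm1' hm2', _, bound_add hm1' hm2' hf1' hf2'⟩⟩
  | smul t h ih =>
    obtain ⟨⟨m1, hm1, f1, hf1⟩, ⟨m1', hm1', f1', hf1'⟩⟩ := ih
    exact ⟨⟨m1, hm1, _, bound_smul t hf1⟩, ⟨m1', hm1', _, bound_smul t hf1'⟩⟩

/-- The Bourne congruence modulo `I⁺(S)`. -/
def c1 : LinCon S where
  r a b := ∃ x y : S, x + x = x ∧ y + y = y ∧ a + x = b + y
  rfl' a := ⟨0, 0, by rw [add_zero], by rw [add_zero], rfl⟩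
  symm' := fun ⟨x, y, hx, hy, h⟩ => ⟨y, x, hy, hx, h.symm⟩
  trans' := by
    rintro a b d ⟨x, y, hx, hy, h⟩ ⟨x', y', hx', hy', h'⟩
    refine ⟨x + x', y' + y, ?_, ?_, ?_⟩
    · calc x + x' + (x + x') = (x + x) + (x' + x') := by
            simp only [add_assoc, add_left_comm, add_comm]
        _ = x + x' := by rw [hx, hx']
    · calc y' + y + (y' + y) = (y' + y') + (y + y) := by
            simp only [add_assoc, add_left_comm, add_comm]
        _ = y' + y := by rw [hy', hy]
    · calc a + (x + x') = (a + x) + x' := (add_assoc _ _ _).symm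
        _ = (b + y) + x' := by rw [h]
        _ = (b + x') + y := by rw [add_right_comm]
        _ = (d + y') + y := by rw [h']
        _ = d + (y' + y) := add_assoc _ _ _
  add' := by
    rintro a b x y ⟨u, v, hu, hv, h⟩ ⟨u', v', hu', hv', h'⟩
    refine ⟨u + u', v + v', ?_, ?_, ?_⟩
    · calc u + u' + (u + u') = (u + u) + (u' + u') := by
            simp only [add_assoc, add_left_comm, add_comm]
        _ = u + u' := by rw [hu, hu']
    · calc v + v' + (v + v') = (v + v) + (v' + v') := by
            simp only [add_assoc, add_left_comm, add_comm]
        _ = v + v' := by rw [hv, hv']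
    · calc a + x + (u + u') = (a + u) + (x + u') := by
            simp only [add_assoc, add_left_comm, add_comm]
        _ = (b + v) + (y + v') := by rw [h, h']
        _ = b + y + (v + v') := by
            simp only [add_assoc, add_left_comm, add_comm]
  smul' := by
    rintro t a b ⟨x, y, hx, hy, h⟩
    exact ⟨t * x, t * y, by rw [← mul_add, hx], by rw [← mul_add, hy],
      by rw [← mul_add, ← mul_add, h]⟩

end ZSFCPAux

open ZSFCPAux in
/-- a zerosumfree left CP-semiring `S` is (1) zeroic and additively
π-regular; (2) its set of additively idempotent elements `I⁺(S)` equals `Se` for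
some multiplicative idempotent `e`; (3) the Bourne congruence modulo `I⁺(S)` is
universal. -/
theorem zerosumfree_leftCPSemiring_structure
    {S : Type u} [Semiring S]
    (hzsf : ∀ a b : S, a + b = 0 → a = 0 ∧ b = 0)
    (hS : IsLeftCPSemiring S) :
    ((∀ s : S, ∃ m : S, s + m = m) ∧
      (∃ n : ℕ, 1 ≤ n ∧ ∃ y : S, n • (1 : S) = n • (1 : S) + y + n • (1 : S))) ∧
    (∃ e : S, e * e = e ∧ {x : S | x + x = x} = {x : S | ∃ s : S, x = s * e}) ∧
    (∀ a b : S, ∃ x y : S, x + x = x ∧ y + y = y ∧ a + x = b + y) := by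
  -- Split the idempotent-ification congruence.
  obtain ⟨e, he1, hmul2, hre2⟩ := (c2 (S := S)).split hS
  -- `e` is multiplicatively idempotent.
  have hee : e * e = e := by
    have := hmul2 e 1 he1
    rwa [one_mul] at this
  -- `e` is additively idempotent.
  have heidem : e + e = e := by
    have := hmul2 1 (1 + 1) (R2.of 1)
    rw [one_mul, add_mul, one_mul] at this
    exact this.symm
  -- Chain bounds from `R2 e 1`.
  obtain ⟨⟨N, hN, u, hu⟩, ⟨M, hM, v, hv⟩⟩ := R2.bound he1
  -- `1 + v = e`.
  have hv' : 1 + v = e := by rwa [nsmul_idem heidem M hM] at hv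
  -- Split the Bourne congruence modulo I⁺.
  obtain ⟨e', he'1, hmul1, -⟩ := (c1 (S := S)).split hS
  -- `e ∈ I⁺` implies `e * e' = 0`.
  have hee' : e * e' = 0 := by
    have h : (c1 (S := S)).r e 0 := ⟨e, e, heidem, heidem, by rw [heidem, zero_add]⟩
    have := hmul1 e 0 h
    rwa [zero_mul] at this
  -- Zerosumfreeness gives `e' = 0`.
  have he'0 : e' = 0 := by
    have h : e' + v * e' = 0 := by
      have h2 : (1 + v) * e' = e * e' := by rw [hv']
      rw [add_mul, one_mul] at h2
      rw [h2, hee']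
    exact (hzsf _ _ h).1
  -- Extract an additively idempotent absorber `t` of `1`.
  obtain ⟨x, y, hx, hy, hxy⟩ := he'1
  rw [he'0, zero_add] at hxy
  -- `hxy : x = 1 + y`, `x, y ∈ I⁺`.
  have hyx : y + x = x := by
    calc y + x = y + (1 + y) := by rw [← hxy]
      _ = 1 + (y + y) := by rw [add_left_comm]
      _ = 1 + y := by rw [hy]
      _ = x := hxy.symm
  have habs : 1 + x = x := by
    calc 1 + x = 1 + (y + x) := by rw [hyx]
      _ = (1 + y) + x := (add_assoc _ _ _).symm
      _ = x + x := by rw [← hxy]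
      _ = x := hx
  -- absorbers for arbitrary elements
  have habs' : ∀ s : S, s + s * x = s * x := by
    intro s
    calc s + s * x = s * (1 + x) := by rw [mul_add, mul_one]
      _ = s * x := by rw [habs]
  refine ⟨⟨fun s => ⟨s * x, habs' s⟩, ⟨N, hN, N • v, ?_⟩⟩, ⟨e, hee, ?_⟩, ?_⟩
  · -- additive π-regularity: `N•1 = N•1 + N•v + N•1`
    have h1 : N • (1 : S) + N • v = e := by
      rw [← smul_add, hv', nsmul_idem heidem N hN]
    have h2 : e + N • (1 : S) = N • (1 : S) := by
      calc e + N • (1 : S) = e + (e + u) := by rw [hu]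
        _ = (e + e) + u := (add_assoc _ _ _).symm
        _ = e + u := by rw [heidem]
        _ = N • (1 : S) := hu
    calc N • (1 : S) = e + N • (1 : S) := h2.symm
      _ = (N • (1 : S) + N • v) + N • (1 : S) := by rw [h1]
  · -- `I⁺(S) = Se`
    ext z
    simp only [Set.mem_setOf_eq]
    constructor
    · intro hz
      refine ⟨z, ?_⟩
      have hzz : (z * e) + (z * e) = z * e := by rw [← mul_add, heidem]
      obtain ⟨⟨m, hm, f, hf⟩, ⟨m', hm', f', hf'⟩⟩ := R2.bound (hre2 z)
      rw [nsmul_idem hz m hm] at hf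
      rw [nsmul_idem hzz m' hm'] at hf'
      -- hf : z*e + f = z,  hf' : z + f' = z*e
      have h1 : z + z * e = z * e := by
        calc z + z * e = z + (z + f') := by rw [hf']
          _ = (z + z) + f' := (add_assoc _ _ _).symm
          _ = z + f' := by rw [hz]
          _ = z * e := hf'
      have h2 : z * e + z = z := by
        calc z * e + z = z * e + (z * e + f) := by rw [hf]
          _ = (z * e + z * e) + f := (add_assoc _ _ _).symm
          _ = z * e + f := by rw [hzz]
          _ = z := hf
      calc z = z * e + z := h2.symm
        _ = z + z * e := add_comm _ _
        _ = z * e := h1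
    · rintro ⟨s, rfl⟩
      rw [← mul_add, heidem]
  · -- Bourne congruence modulo I⁺ is universal
    intro a b
    refine ⟨a * x + b * x, a * x + b * x, ?_, ?_, ?_⟩
    · calc a * x + b * x + (a * x + b * x)
          = a * (x + x) + b * (x + x) := by
            simp only [mul_add]
            simp only [add_assoc, add_left_comm, add_comm]
        _ = a * x + b * x := by rw [hx]
    · calc a * x + b * x + (a * x + b * x)
          = a * (x + x) + b * (x + x) := by
            simp only [mul_add]
            simp only [add_assoc, add_left_comm, add_comm]
        _ = a * x + b * x := by rw [hx]
    · calc a + (a * x + b * x) = (a + a * x) + b * x := (add_assoc _ _ _).symm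
        _ = a * x + b * x := by rw [habs' a]
        _ = a * x + (b + b * x) := by rw [habs' b]
        _ = b + (a * x + b * x) := by simp only [add_assoc, add_left_comm, add_comm]
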